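/- Assume Condition C. Then for each i ∈ {1,…,r}, ρ_i ⊗_k X ≅ X as Λ-modules, and ρ_i ⊗_k X is indecomposable as a ΛH_X-module. -/

import Mathlib

/-! Common framework: twisted modules, skew group algebras (characterized by their
universal basis property), restriction of scalars, coset sums, indecomposability. -/

noncomputable section

section Framework

variable {k Λ G A : Type} [Field k] [Ring Λ] [Algebra k Λ] [Group G]

/-- The twisted module `{}^{g}X` : the same underlying abelian group as `X`, with the
`Λ`-action `a · x = (φ g)⁻¹ (a) • x`. -/
def Twisted (_φ : G →* (Λ ≃ₐ[k] Λ)) (_g : G) (X : Type) : Type := X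

instance Twisted.instAddCommGroup (φ : G →* (Λ ≃ₐ[k] Λ)) (g : G) (X : Type) [AddCommGroup X] :
    AddCommGroup (Twisted φ g X) := inferInstanceAs (AddCommGroup X)

instance Twisted.instModule (φ : G →* (Λ ≃ₐ[k] Λ)) (g : G) (X : Type) [AddCommGroup X]
    [Module Λ X] : Module Λ (Twisted φ g X) :=
  Module.compHom X ((φ g⁻¹).toAlgHom.toRingHom)

/-- A module over another ring `A`, viewed as a `Λ`-module through a map `ι : Λ →ₐ[k] A`
(restriction of scalars). -/
def Res {A : Type} [Ring A] [Algebra k A] (_ι : Λ →ₐ[k] A) (M : Type) : Type := M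

instance Res.instAddCommGroup {A : Type} [Ring A] [Algebra k A] (ι : Λ →ₐ[k] A) (M : Type)
    [AddCommGroup M] : AddCommGroup (Res ι M) := inferInstanceAs (AddCommGroup M)

instance Res.instModule {A : Type} [Ring A] [Algebra k A] (ι : Λ →ₐ[k] A) (M : Type)
    [AddCommGroup M] [Module A M] : Module Λ (Res ι M) :=
  Module.compHom M ι.toRingHom

/-- `A`, together with an embedding `ι : Λ → A` and units `u g` (`g ∈ G`), is a realization of
the skew group algebra `ΛG`:  multiplication satisfies `g a · h b = g h · h⁻¹(a) b`
(equivalently the commutation rule below), and `A` is free as a left `Λ`-module with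
basis `{u g ∣ g ∈ G}`. -/
structure IsSkewGroupAlgebra (φ : G →* (Λ ≃ₐ[k] Λ)) (A : Type) [Ring A] [Algebra k A]
    (ι : Λ →ₐ[k] A) (u : G →* Aˣ) : Prop where
  skew_comm : ∀ (g : G) (a : Λ), (u g : A) * ι a = ι (φ g a) * (u g : A)
  free : ∀ x : A, ∃! c : G →₀ Λ, x = c.sum fun g a => (u g : A) * ι a

/-- `X` is a `g`-invariant module: `{}^{g}X ≅ X`. -/
def IsGInvariantAt (φ : G →* (Λ ≃ₐ[k] Λ)) (g : G) (X : Type) [AddCommGroup X] [Module Λ X] :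
    Prop := Nonempty (Twisted φ g X ≃ₗ[Λ] X)

/-- `X` is a `G`-invariant module: `{}^{g}X ≅ X` for all `g ∈ G`. -/
def IsGInvariant (φ : G →* (Λ ≃ₐ[k] Λ)) (X : Type) [AddCommGroup X] [Module Λ X] : Prop :=
  ∀ g : G, IsGInvariantAt φ g X

/-- The set `H_X = {g ∈ G ∣ {}^{g}X ≅ X}` (a subgroup of `G`). -/
def Hset (φ : G →* (Λ ≃ₐ[k] Λ)) (X : Type) [AddCommGroup X] [Module Λ X] : Set G :=
  {g : G | IsGInvariantAt φ g X}

/-- `T` is a complete set of left coset representatives for `H` in `G`. -/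
def IsLeftTransversal {G : Type} [Group G] (H T : Set G) : Prop :=
  ∀ g : G, ∃! t : G, t ∈ T ∧ t⁻¹ * g ∈ H

/-- The direct sum `⊕_{t ∈ T} {}^{t}X`. -/
def CosetSum (φ : G →* (Λ ≃ₐ[k] Λ)) (T : Set G) (X : Type) : Type :=
  ∀ t : T, Twisted φ (t : G) X

instance CosetSum.instAddCommGroup (φ : G →* (Λ ≃ₐ[k] Λ)) (T : Set G) (X : Type)
    [AddCommGroup X] : AddCommGroup (CosetSum φ T X) :=
  inferInstanceAs (AddCommGroup (∀ t : T, Twisted φ (t : G) X))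

instance CosetSum.instModule (φ : G →* (Λ ≃ₐ[k] Λ)) (T : Set G) (X : Type)
    [AddCommGroup X] [Module Λ X] : Module Λ (CosetSum φ T X) :=
  inferInstanceAs (Module Λ (∀ t : T, Twisted φ (t : G) X))

/-- The direct sum `⊕_{g ∈ G} {}^{g}X`. -/
def GSum (φ : G →* (Λ ≃ₐ[k] Λ)) (X : Type) : Type := ∀ g : G, Twisted φ g X

instance GSum.instAddCommGroup (φ : G →* (Λ ≃ₐ[k] Λ)) (X : Type) [AddCommGroup X] :
    AddCommGroup (GSum φ X) := inferInstanceAs (AddCommGroup (∀ g : G, Twisted φ g X))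

instance GSum.instModule (φ : G →* (Λ ≃ₐ[k] Λ)) (X : Type) [AddCommGroup X] [Module Λ X] :
    Module Λ (GSum φ X) := inferInstanceAs (Module Λ (∀ g : G, Twisted φ g X))

end Framework

/-- A module is indecomposable: it is nonzero and is not the direct sum of two nonzero
submodules. -/
def IsIndec (R X : Type) [Ring R] [AddCommGroup X] [Module R X] : Prop :=
  Nontrivial X ∧ ∀ p q : Submodule R X, IsCompl p q → p = ⊥ ∨ q = ⊥

/-- `X` is an indecomposable `G`-invariant module: it is nonzero, `G`-invariant, and does not
decompose as a direct sum of two nonzero `G`-invariant modules. -/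
def IsIndecGInvariant {k Λ G : Type} [Field k] [Ring Λ] [Algebra k Λ] [Group G]
    (φ : G →* (Λ ≃ₐ[k] Λ)) (X : Type) [AddCommGroup X] [Module Λ X] : Prop :=
  Nontrivial X ∧ IsGInvariant φ X ∧
    ∀ p q : Submodule Λ X, IsCompl p q →
      IsGInvariant φ p → IsGInvariant φ q → p = ⊥ ∨ q = ⊥

/-- `(M, θ)` is the module obtained from `X` by induction (extension of scalars) along the
ring homomorphism `j : R → S` : i.e. `θ : X → M` is `j`-semilinear and universal among
`j`-semilinear maps from `X` to `S`-modules.  For `j : Λ → ΛG` this characterizes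
`ΛG ⊗_Λ X` together with the canonical map `x ↦ 1 ⊗ x`. -/
structure IsInducedAlong {R S : Type} [Ring R] [Ring S] (j : R →+* S)
    (X : Type) [AddCommGroup X] [Module R X]
    (M : Type) [AddCommGroup M] [Module S M] (θ : X →+ M) : Prop where
  semilinear : ∀ (r : R) (x : X), θ (r • x) = j r • θ x
  universal : ∀ (N : Type) [AddCommGroup N] [Module S N] (f : X →+ N),
      (∀ (r : R) (x : X), f (r • x) = j r • f x) →
      ∃! F : M →ₗ[S] N, ∀ x : X, F (θ x) = f x

/-- An isomorphism of modules, with the two module structures given explicitly (used when the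
same underlying type carries two different module structures). -/
def ModIso (R : Type) [Semiring R] (M N : Type) [AddCommMonoid M] [AddCommMonoid N]
    (mM : Module R M) (mN : Module R N) : Prop :=
  Nonempty (@LinearEquiv R R _ _ (RingHom.id R) (RingHom.id R) RingHomInvPair.ids
    RingHomInvPair.ids M N _ _ mM mN)

/-- The scalar action of an explicitly given module structure. -/
def msmul {R M : Type} [Semiring R] [AddCommMonoid M] (m : Module R M) (r : R) (x : M) : M :=
  letI := m; r • x

/-- `X'` realizes the `ΛH`-module `ρ ⊗_k X` for the one-dimensional representation
(character) `χ` of `H`: there is an additive isomorphism `e : X' → X` (`l₀ ⊗ x ↦ x`)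
commuting with the `Λ`-action, and transforming the action of `h ∈ H` by the scalar `χ h`. -/
def IsCharTwist {k Λ H B : Type} [Field k] [Ring Λ] [Algebra k Λ] [Group H]
    [Ring B] [Algebra k B] (ιB : Λ →ₐ[k] B) (uB : H →* Bˣ) (χ : H →* kˣ)
    (X X' : Type) [AddCommGroup X] [Module B X] [AddCommGroup X'] [Module B X'] : Prop :=
  ∃ e : X' ≃+ X, (∀ (a : Λ) (x : X'), e (ιB a • x) = ιB a • e x) ∧
    ∀ (h : H) (x : X'), e (uB h • x) = algebraMap k B (χ h : k) • (uB h • e x)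

end

/-- **Lemma 2.5(1).** Assume Condition C.  Then for each `i`, `ρ_i ⊗_k X ≅ X` as
`Λ`-modules, and `ρ_i ⊗_k X` is indecomposable as a `ΛH_X`-module. -/
theorem charTwist_iso_and_indecomposable
    (k Λ G : Type) [Field k] [IsAlgClosed k] [Ring Λ] [Algebra k Λ]
    [Group G] [Fintype G] (hchar : (Fintype.card G : k) ≠ 0)
    (φ : G →* (Λ ≃ₐ[k] Λ))
    -- Condition C : X is a finite dimensional indecomposable Λ-module with H_X abelian
    (X : Type) [AddCommGroup X] [Module Λ X] [Module k X] [IsScalarTower k Λ X]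
    [FiniteDimensional k X] (hX : IsIndec Λ X)
    (H : Subgroup G) (hH : (H : Set G) = Hset φ X)
    (hab : ∀ a b : H, a * b = b * a)
    -- the skew group algebra ΛH_X
    (B : Type) [Ring B] [Algebra k B] (ιB : Λ →ₐ[k] B) (uB : H →* Bˣ)
    (hB : IsSkewGroupAlgebra (φ.comp H.subtype) B ιB uB)
    -- the ΛH_X-module structure on X (extending its Λ-module structure)
    [Module B X] (hBX : ∀ (a : Λ) (x : X), ιB a • x = a • x)
    -- the r = |H_X| pairwise distinct characters of H_X
    (r : ℕ) (hr : r = Nat.card H)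
    (χ : Fin r → (H →* kˣ)) (hχ : Function.Injective χ)
    -- the ΛH_X-modules ρ_i ⊗_k X
    (Xρ : Fin r → Type) [∀ i, AddCommGroup (Xρ i)] [∀ i, Module B (Xρ i)]
    (hXρ : ∀ i, IsCharTwist ιB uB (χ i) X (Xρ i))
    (i : Fin r) :
    Nonempty (Res ιB (Xρ i) ≃ₗ[Λ] X) ∧ IsIndec B (Xρ i) := by
  obtain ⟨e, he1, he2⟩ := hXρ i
  let toX : Res ιB (Xρ i) → Xρ i := fun x => x
  let E : Res ιB (Xρ i) ≃ₗ[Λ] X :=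
    { toFun := fun x => e (toX x)
      invFun := fun y => (e.symm y : Xρ i)
      map_add' := fun x y => e.map_add (toX x) (toX y)
      map_smul' := fun a x => by
        show e (ιB a • toX x) = a • e (toX x)
        rw [he1, hBX]
      left_inv := fun x => e.symm_apply_apply (toX x)
      right_inv := fun y => e.apply_symm_apply y }
  refine ⟨⟨E⟩, ?_, ?_⟩
  · haveI : Nontrivial X := hX.1
    exact e.toEquiv.symm.symm.nontrivial
  · intro p q hpq
    -- turn the B-submodules into Λ-submodules of the restriction
    let toΛ : Submodule B (Xρ i) → Submodule Λ (Res ιB (Xρ i)) := fun s =>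
      { carrier := {x : Res ιB (Xρ i) | toX x ∈ s}
        add_mem' := fun ha hb => s.add_mem ha hb
        zero_mem' := s.zero_mem
        smul_mem' := fun a x hx => s.smul_mem (ιB a) hx }
    have mem_toΛ : ∀ (s : Submodule B (Xρ i)) (x : Res ιB (Xρ i)),
        x ∈ toΛ s ↔ toX x ∈ s := fun s x => Iff.rfl
    have hpq' : IsCompl (toΛ p) (toΛ q) := by
      constructor
      · rw [disjoint_iff]
        have h1 : p ⊓ q = ⊥ := disjoint_iff.1 hpq.disjoint
        apply Submodule.ext
        intro x
        simp only [Submodule.mem_bot, Submodule.mem_inf, mem_toΛ]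
        have := Submodule.ext_iff.1 h1 (toX x)
        simp only [Submodule.mem_bot, Submodule.mem_inf] at this
        exact this
      · rw [codisjoint_iff]
        have h2 : p ⊔ q = ⊤ := codisjoint_iff.1 hpq.codisjoint
        rw [eq_top_iff]
        intro x _
        have hx : toX x ∈ p ⊔ q := by rw [h2]; trivial
        obtain ⟨y, hy, z, hz, hyz⟩ := Submodule.mem_sup.1 hx
        exact Submodule.mem_sup.2 ⟨y, hy, z, hz, hyz⟩
    have hiso := (Submodule.orderIsoMapComap E).isCompl hpq'
    rcases hX.2 _ _ hiso with h | h
    · left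
      rw [Submodule.eq_bot_iff]
      intro x hx
      have : E x ∈ Submodule.orderIsoMapComap E (toΛ p) :=
        Submodule.mem_map_of_mem hx
      rw [h, Submodule.mem_bot] at this
      have hx0 : x = 0 := by
        have := congrArg E.symm this
        exact E.injective ((E.symm.injective this).trans E.map_zero.symm)
      exact hx0
    · right
      rw [Submodule.eq_bot_iff]
      intro x hx
      have : E x ∈ Submodule.orderIsoMapComap E (toΛ q) :=
        Submodule.mem_map_of_mem hx
      rw [h, Submodule.mem_bot] at this
      have hx0 : x = 0 := by
        have := congrArg E.symm this
        exact E.injective ((E.symm.injective this).trans E.map_zero.symm)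
      exact hx0
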